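/- In the compound model where N has the power series distribution P(N=n) = a_n θ^n / C(θ) and Y = max(X_1,...,X_N) of i.i.d. N(μ,σ²) variables, the conditional pmf of N given Y = y is P(N=z | Y=y) = a_z θ^{z-1} z Φ^{z-1}((y-μ)/σ) / C'(θΦ((y-μ)/σ)), and consequently E(N | Y=y) = 1 + θΦ((y-μ)/σ)·C''(θΦ((y-μ)/σ))/C'(θΦ((y-μ)/σ)). -/

import Mathlib

open MeasureTheory Filter Topology

noncomputable def stdPdf (x : ℝ) : ℝ := (Real.sqrt (2 * Real.pi))⁻¹ * Real.exp (-(x ^ 2) / 2)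

noncomputable def stdCdf (x : ℝ) : ℝ := ∫ t in Set.Iic x, stdPdf t

lemma stdPdf_pos (x : ℝ) : 0 < stdPdf x := by
  unfold stdPdf
  have := Real.pi_pos
  positivity

lemma stdCdf_nonneg (x : ℝ) : 0 ≤ stdCdf x := by
  unfold stdCdf
  exact setIntegral_nonneg measurableSet_Iic fun t _ => (stdPdf_pos t).le

/-- in the compound NPS model, the conditional pmf of N given Y = y is
`P(N=z|Y=y) = a_z θ^{z-1} z Φ^{z-1}(z)/C'(θΦ(z))`, and consequently
`E(N|Y=y) = 1 + θΦ C''(θΦ)/C'(θΦ)`. -/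
theorem nps_conditional_pmf_and_mean (μ σ θ : ℝ) (hσ : 0 < σ) (hθ : 0 < θ)
    (a : ℕ → ℝ) (ha : ∀ n, 0 ≤ a n)
    (C C' C'' : ℝ → ℝ)
    (hC' : ∀ u, C' u = ∑' n : ℕ, (n : ℝ) * a n * u ^ (n - 1))
    (hC'' : ∀ u, C'' u = ∑' n : ℕ, (n : ℝ) * ((n : ℝ) - 1) * a n * u ^ (n - 2))
    (hCθ : 0 < C θ)
    (y t : ℝ) (ht : t = θ * stdCdf ((y - μ) / σ))
    (hC'pos : 0 < C' t)
    (hsum2 : Summable fun n : ℕ => (n : ℝ) ^ 2 * a n * t ^ (n - 1)) :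
    (∀ z : ℕ,
      (a z * θ ^ z / (σ * C θ) * z * stdPdf ((y - μ) / σ) * (stdCdf ((y - μ) / σ)) ^ (z - 1))
        / (θ / σ * stdPdf ((y - μ) / σ) * C' t / C θ)
      = a z * θ ^ (z - 1) * z * (stdCdf ((y - μ) / σ)) ^ (z - 1) / C' t) ∧
    ∑' z : ℕ, (z : ℝ) *
        (a z * θ ^ (z - 1) * z * (stdCdf ((y - μ) / σ)) ^ (z - 1) / C' t)
      = 1 + t * C'' t / C' t := by
  have hφ : stdPdf ((y - μ) / σ) ≠ 0 := (stdPdf_pos _).ne'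
  have hσ' : σ ≠ 0 := hσ.ne'
  have hCn : C θ ≠ 0 := hCθ.ne'
  have hC'n : C' t ≠ 0 := hC'pos.ne'
  have hθ' : θ ≠ 0 := hθ.ne'
  have hS : 0 ≤ stdCdf ((y - μ) / σ) := stdCdf_nonneg _
  have ht0 : 0 ≤ t := ht ▸ mul_nonneg hθ.le hS
  constructor
  · intro z
    match z with
    | 0 => simp
    | Nat.succ n =>
      simp only [Nat.succ_sub_one]
      field_simp
      simp only [Nat.succ_eq_add_one, pow_succ]
      ring
  · -- pointwise term identity
    have hterm : ∀ z : ℕ, (z : ℝ) *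
        (a z * θ ^ (z - 1) * z * (stdCdf ((y - μ) / σ)) ^ (z - 1) / C' t)
        = (z : ℝ) ^ 2 * a z * t ^ (z - 1) / C' t := by
      intro z
      rw [ht, mul_pow]
      ring
    have h1 : Summable fun n : ℕ => (n : ℝ) * a n * t ^ (n - 1) := by
      apply hsum2.of_nonneg_of_le
      · intro n
        exact mul_nonneg (mul_nonneg n.cast_nonneg (ha n)) (pow_nonneg ht0 _)
      · intro n
        have hn : (n : ℝ) ≤ (n : ℝ) ^ 2 := by
          have := Nat.le_self_pow two_ne_zero n
          exact_mod_cast this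
        exact mul_le_mul_of_nonneg_right
          (mul_le_mul_of_nonneg_right hn (ha n)) (pow_nonneg ht0 _)
    have h2 : Summable fun n : ℕ => (n : ℝ) * ((n : ℝ) - 1) * a n * t ^ (n - 1) :=
      (hsum2.sub h1).congr fun n => by ring
    have hpt : ∀ n : ℕ, (n : ℝ) * ((n : ℝ) - 1) * a n * t ^ (n - 1)
        = t * ((n : ℝ) * ((n : ℝ) - 1) * a n * t ^ (n - 2)) := by
      intro n
      match n with
      | 0 => simp
      | 1 => norm_num
      | Nat.succ (Nat.succ m) =>
        have h1' : m + 1 + 1 - 1 = m + 1 := rfl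
        have h2' : m + 1 + 1 - 2 = m := rfl
        rw [h1', h2', pow_succ]
        ring
    calc ∑' z : ℕ, (z : ℝ) *
          (a z * θ ^ (z - 1) * z * (stdCdf ((y - μ) / σ)) ^ (z - 1) / C' t)
        = (∑' z : ℕ, (z : ℝ) ^ 2 * a z * t ^ (z - 1)) / C' t := by
          rw [← tsum_div_const]
          exact tsum_congr hterm
      _ = (C' t + t * C'' t) / C' t := by
          congr 1
          have hsplit : ∀ n : ℕ, (n : ℝ) ^ 2 * a n * t ^ (n - 1)
              = (n : ℝ) * a n * t ^ (n - 1)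
                + (n : ℝ) * ((n : ℝ) - 1) * a n * t ^ (n - 1) := fun n => by ring
          rw [tsum_congr hsplit, Summable.tsum_add h1 h2, hC' t]
          congr 1
          rw [tsum_congr hpt, tsum_mul_left, hC'' t]
      _ = 1 + t * C'' t / C' t := by field_simp
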